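/- arXiv:2106.00427 — 2 statements merged into one kernel-verified Lean document; each statement's English description precedes it below -/
import Mathlib

section
/- An entire function G satisfies limsup_{|z|→∞} Re(conj(z)·G(z)) ≤ 0 if and only if G(z) = a z + b with either (i) Re a < 0 and b ∈ ℂ, or (ii) a purely imaginary and b = 0. -/
open Complex

private lemma re_conj_mul_affine (a b z : ℂ) :
    ((starRingEnd ℂ) z * (a * z + b)).re
      = a.re * Complex.normSq z + ((starRingEnd ℂ) z * b).re := by
  simp [Complex.mul_re, Complex.add_re, Complex.add_im, Complex.mul_im,
    Complex.normSq_apply]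
  ring

private lemma re_conj_mul_le (z b : ℂ) :
    ((starRingEnd ℂ) z * b).re ≤ ‖z‖ * ‖b‖ := by
  calc ((starRingEnd ℂ) z * b).re ≤ ‖(starRingEnd ℂ) z * b‖ :=
        Complex.re_le_norm _
  _ = ‖z‖ * ‖b‖ := by simp [map_mul]

private lemma re_conj_mul_ge (z b : ℂ) :
    -(‖z‖ * ‖b‖) ≤ ((starRingEnd ℂ) z * b).re := by
  have := re_conj_mul_le z (-b)
  simp only [mul_neg, Complex.neg_re, map_neg, norm_neg] at this
  linarith

theorem limsup_re_condition_iff_affine (G : ℂ → ℂ) (hG : Differentiable ℂ G) :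
    (∀ ε : ℝ, 0 < ε → ∃ R : ℝ, 0 < R ∧ ∀ z : ℂ, R ≤ ‖z‖ →
      ((starRingEnd ℂ) z * G z).re ≤ ε) ↔
    ∃ a b : ℂ, (∀ z, G z = a * z + b) ∧
      (a.re < 0 ∨ (a.re = 0 ∧ b = 0)) := by
  constructor
  · intro h
    set b := G 0 with hb
    set H := dslope G 0 with hHdef
    have hH : Differentiable ℂ H := by
      intro z
      rcases eq_or_ne z 0 with rfl | hz
      · obtain ⟨p, hp⟩ := hG.analyticAt 0
        exact hp.has_fpower_series_dslope_fslope.differentiableAt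
      · exact (differentiableAt_dslope_of_ne hz).2 (hG z)
    have hGz : ∀ z, G z = z * H z + b := by
      intro z
      rcases eq_or_ne z 0 with rfl | hz
      · simp [hb]
      · rw [hHdef, dslope_of_ne _ hz, slope_def_field]
        field_simp
        rw [hb]; ring
    -- Re H ≤ 0 everywhere
    have hre : ∀ z, (H z).re ≤ 0 := by
      intro z
      refine le_of_forall_pos_le_add (fun δ hδ => ?_)
      obtain ⟨R, hR0, hRb⟩ := h 1 one_pos
      set r : ℝ := max (max R (‖z‖ + 1)) (max (2 / δ) (2 * ‖b‖ / δ) + 1)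
        with hrdef
    -- basic facts about r
      have h2δ : 0 ≤ 2 / δ := by positivity
      have hbδ : 0 ≤ 2 * ‖b‖ / δ := by positivity
      have hx : (0:ℝ) ≤ max (2/δ) (2 * ‖b‖ / δ) := le_trans h2δ (le_max_left _ _)
      have hr1 : (1 : ℝ) ≤ r :=
        le_trans (by linarith : (1:ℝ) ≤ max (2/δ) (2 * ‖b‖ / δ) + 1) (le_max_right _ _)
      have hr0 : 0 < r := lt_of_lt_of_le one_pos hr1
      have hrR : R ≤ r := le_trans (le_max_left _ _) (le_max_left _ _)
      have hrz : ‖z‖ < r :=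
        lt_of_lt_of_le (by linarith [norm_nonneg z] : ‖z‖ < ‖z‖ + 1)
          (le_trans (le_max_right _ _) (le_max_left _ _))
      have hr2 : 2 / δ ≤ r := le_trans (le_trans (le_max_left _ _) (le_add_of_nonneg_right zero_le_one)) (le_max_right _ _)
      have hrb2 : 2 * ‖b‖ / δ ≤ r := le_trans (le_trans (le_max_right _ _) (le_add_of_nonneg_right zero_le_one)) (le_max_right _ _)
      -- boundary bound on Re H
      have hbound : ∀ w : ℂ, ‖w‖ = r → (H w).re ≤ δ := by
        intro w hw
        have hw0 : w ≠ 0 := by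
          intro h0; rw [h0] at hw; simp at hw; linarith
        have h1 : ((starRingEnd ℂ) w * G w).re ≤ 1 := hRb w (by rw [hw]; exact hrR)
        have hGw : G w = H w * w + b := by rw [hGz w]; ring
        rw [hGw, re_conj_mul_affine] at h1
        have hns : Complex.normSq w = r * r := by
          rw [Complex.normSq_eq_norm_sq, hw]; ring
        have hlow := re_conj_mul_ge w b
        rw [hw] at hlow
        have hkey : (H w).re * (r * r) ≤ 1 + r * ‖b‖ := by
          rw [hns] at h1; nlinarith
        -- now (H w).re ≤ (1 + r |b|)/r² ≤ δ/2 + δ/2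
        have hrr : r * r ≥ 2 / δ := le_trans hr2 (by nlinarith)
        have e1 : (1 : ℝ) ≤ δ / 2 * (r * r) := by
          rw [ge_iff_le, div_le_iff₀ hδ] at hrr
          nlinarith
        have e2 : r * ‖b‖ ≤ δ / 2 * (r * r) := by
          rw [div_le_iff₀ hδ] at hrb2
          nlinarith [norm_nonneg b]
        nlinarith
      -- maximum modulus on exp ∘ H
      have hmax : ‖Complex.exp (H z)‖ ≤ Real.exp δ := by
        have hd : DiffContOnCl ℂ (fun w => Complex.exp (H w)) (Metric.ball (0:ℂ) r) :=
          (Complex.differentiable_exp.comp hH).diffContOnCl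
        refine Complex.norm_le_of_forall_mem_frontier_norm_le Metric.isBounded_ball hd
          (fun w hw => ?_) ?_
        · rw [frontier_ball (0:ℂ) (ne_of_gt hr0)] at hw
          have hwr : ‖w‖ = r := by
            simpa [Complex.dist_eq] using hw
          rw [Complex.norm_exp]
          exact Real.exp_le_exp.2 (hbound w hwr)
        · rw [closure_ball (0:ℂ) (ne_of_gt hr0)]
          simpa [Complex.dist_eq] using hrz.le
      rw [Complex.norm_exp, Real.exp_le_exp] at hmax
      linarith
    -- H is constant by Liouville
    set a := H 0 with ha
    have h1ne : ∀ z, (1 : ℂ) - H z ≠ 0 := by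
      intro z hz
      rw [sub_eq_zero] at hz
      have : (H z).re = 1 := by rw [← hz]; simp
      linarith [hre z]
    have hφd : Differentiable ℂ (fun z => ((1:ℂ) - H z)⁻¹) := fun z =>
      (((differentiableAt_const 1).sub (hH z)).inv (h1ne z))
    have hφb : Bornology.IsBounded (Set.range fun z => ((1:ℂ) - H z)⁻¹) := by
      rw [Metric.isBounded_iff_subset_closedBall 0]
      refine ⟨1, ?_⟩
      rintro _ ⟨z, rfl⟩
      rw [Metric.mem_closedBall, dist_zero_right, norm_inv]
      have h1le : (1:ℝ) ≤ ‖(1:ℂ) - H z‖ := by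
        have : (1:ℝ) ≤ ((1:ℂ) - H z).re := by
          rw [Complex.sub_re, Complex.one_re]; linarith [hre z]
        exact le_trans this (le_trans (Complex.re_le_norm _) (le_of_eq rfl))
      calc ‖(1:ℂ) - H z‖⁻¹ ≤ 1⁻¹ := by
            apply inv_anti₀ one_pos h1le
      _ = 1 := inv_one
    have hconst : ∀ z, H z = a := by
      intro z
      have := hφd.apply_eq_apply_of_bounded hφb z 0
      have h2 := inv_injective this
      linear_combination -h2
    refine ⟨a, b, fun z => ?_, ?_⟩
    · rw [hGz z, hconst z]; ring
    · have haz : a.re ≤ 0 := hre 0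
      rcases lt_or_eq_of_le haz with h' | h'
      · exact Or.inl h'
      · refine Or.inr ⟨h', ?_⟩
        by_contra hb0
        have hab : 0 < ‖b‖ := norm_pos_iff.mpr hb0
        obtain ⟨R, hR0, hRb⟩ := h 1 one_pos
        set r : ℝ := max R (2 / ‖b‖) with hr
        have hrR : R ≤ r := le_max_left _ _
        have hr0 : 0 < r := lt_of_lt_of_le hR0 hrR
        set z₀ : ℂ := ((r / ‖b‖ : ℝ) : ℂ) * b with hz₀
        have habs : ‖z₀‖ = r := by
          rw [hz₀, norm_mul, Complex.norm_real, Real.norm_eq_abs, abs_of_pos (by positivity)]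
          field_simp
        have hcond := hRb z₀ (by rw [habs]; exact hrR)
        rw [hGz z₀, show z₀ * H z₀ + b = H z₀ * z₀ + b by ring, hconst z₀,
          re_conj_mul_affine, h', zero_mul, zero_add] at hcond
        have hre0 : ((starRingEnd ℂ) z₀ * b).re = r * ‖b‖ := by
          have h1 : (starRingEnd ℂ) z₀ * b
              = ((r / ‖b‖ * Complex.normSq b : ℝ) : ℂ) := by
            rw [hz₀, map_mul, Complex.conj_ofReal, Complex.ofReal_mul, mul_assoc]
            congr 1
            rw [Complex.normSq_eq_conj_mul_self]
          rw [h1, Complex.ofReal_re, Complex.normSq_eq_norm_sq]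
          field_simp
        rw [hre0] at hcond
        have h2r : 2 / ‖b‖ ≤ r := le_max_right _ _
        rw [div_le_iff₀ hab] at h2r
        linarith
  · rintro ⟨a, b, hab, hcase⟩ ε hε
    rcases hcase with hneg | ⟨hre0, hb0⟩
    · refine ⟨max 1 (‖b‖ / (-a.re)), lt_of_lt_of_le one_pos (le_max_left _ _),
        fun z hz => ?_⟩
      rw [hab z, re_conj_mul_affine]
      have h1 : (1:ℝ) ≤ ‖z‖ := le_trans (le_max_left _ _) hz
      have h2 : ‖b‖ / (-a.re) ≤ ‖z‖ := le_trans (le_max_right _ _) hz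
      have h3 := re_conj_mul_le z b
      have hns : Complex.normSq z = ‖z‖ * ‖z‖ := by
        rw [Complex.normSq_eq_norm_sq]; ring
      rw [div_le_iff₀ (by linarith : (0:ℝ) < -a.re)] at h2
      nlinarith
    · exact ⟨1, one_pos, fun z hz => by rw [hab z, hb0, re_conj_mul_affine, hre0]; simpa using hε.le⟩
end

section
/- Let φ(z) = a z + b with 0 < |a| < 1 and fixed point α = b/(1-a). Suppose w is holomorphic near α with w(α) ≠ 0 and f, g are holomorphic near α, not identically zero, both satisfying w(z)·h(φ(z)) = λ·h(z) near α for the same λ ≠ 0 (h = f and h = g). Then f and g have the same order of vanishing M at α, λ = a^M w(α), and f = c·g near α for some constant c ∈ ℂ. -/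
open Complex Filter Topology

private lemma pow_inj_abs {a : ℂ} (h0 : 0 < ‖a‖) (h1 : ‖a‖ < 1)
    {m n : ℕ} (h : a ^ m = a ^ n) : m = n := by
  have habs : ‖a‖ ^ m = ‖a‖ ^ n := by
    have := congrArg norm h
    simpa only [norm_pow] using this
  exact (pow_right_strictAnti₀ h0 h1).injective habs

private lemma eq_at_of_punctured {F G : ℂ → ℂ} {α : ℂ} (hF : ContinuousAt F α)
    (hG : ContinuousAt G α) (h : ∀ᶠ z in 𝓝[≠] α, F z = G z) : F α = G α :=
  tendsto_nhds_unique (hF.tendsto.mono_left nhdsWithin_le_nhds)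
    (Filter.Tendsto.congr' (Filter.EventuallyEq.symm h)
      (hG.tendsto.mono_left nhdsWithin_le_nhds))

private lemma key_lam {a b lam α : ℂ} (hfix : a * α + b = α)
    {w h u : ℂ → ℂ} (hw : AnalyticAt ℂ w α) (hu : AnalyticAt ℂ u α) (huα : u α ≠ 0)
    {M : ℕ} (hrep : ∀ᶠ z in 𝓝 α, h z = (z - α) ^ M * u z)
    (heq : ∀ᶠ z in 𝓝 α, w z * h (a * z + b) = lam * h z) :
    lam = a ^ M * w α := by
  have htend : Filter.Tendsto (fun z : ℂ => a * z + b) (𝓝 α) (𝓝 α) := by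
    have : Continuous fun z : ℂ => a * z + b := by continuity
    simpa [hfix] using this.tendsto α
  have hrep' : ∀ᶠ z in 𝓝 α, h (a * z + b) = (a * z + b - α) ^ M * u (a * z + b) :=
    htend.eventually hrep
  have hcomb : ∀ᶠ z in 𝓝[≠] α,
      (fun z => a ^ M * w z * u (a * z + b)) z = (fun z => lam * u z) z := by
    have hE : ∀ᶠ z in 𝓝[≠] α, z ≠ α := by
      have : ∀ᶠ z in 𝓝[≠] α, z ∈ ({α}ᶜ : Set ℂ) := eventually_mem_nhdsWithin
      exact this.mono fun z hz => hz
    filter_upwards [heq.filter_mono nhdsWithin_le_nhds,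
      hrep.filter_mono nhdsWithin_le_nhds, hrep'.filter_mono nhdsWithin_le_nhds, hE]
      with z h1 h2 h3 hz
    have keyeq : (a * z + b - α) ^ M = a ^ M * (z - α) ^ M := by
      rw [show a * z + b - α = a * (z - α) by linear_combination hfix, mul_pow]
    rw [h2, h3, keyeq] at h1
    have hpow : ((z - α) ^ M : ℂ) ≠ 0 := pow_ne_zero _ (sub_ne_zero.mpr hz)
    apply mul_left_cancel₀ hpow
    show (z - α) ^ M * (a ^ M * w z * u (a * z + b)) = (z - α) ^ M * (lam * u z)
    linear_combination h1
  have hcu : ContinuousAt (fun z : ℂ => u (a * z + b)) α := by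
    have h1 : ContinuousAt (fun z : ℂ => a * z + b) α := by fun_prop
    have h2 : ContinuousAt u (a * α + b) := by rw [hfix]; exact hu.continuousAt
    exact ContinuousAt.comp (x := α) h2 h1
  have hF : ContinuousAt (fun z : ℂ => a ^ M * w z * u (a * z + b)) α :=
    (continuousAt_const.mul hw.continuousAt).mul hcu
  have hG : ContinuousAt (fun z : ℂ => lam * u z) α :=
    continuousAt_const.mul hu.continuousAt
  have h5 : a ^ M * w α * u (a * α + b) = lam * u α := eq_at_of_punctured hF hG hcomb
  rw [hfix] at h5
  exact (mul_right_cancel₀ huα h5).symm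

theorem eigenvalues_simple (a b lam : ℂ)
    (ha0 : 0 < ‖a‖) (ha1 : ‖a‖ < 1) (hlam : lam ≠ 0)
    (α : ℂ) (hα : α = b / (1 - a))
    (w f g : ℂ → ℂ)
    (hw : AnalyticAt ℂ w α) (hwα : w α ≠ 0)
    (hf : AnalyticAt ℂ f α) (hg : AnalyticAt ℂ g α)
    (hf0 : ¬ ∀ᶠ z in nhds α, f z = 0)
    (hg0 : ¬ ∀ᶠ z in nhds α, g z = 0)
    (heqf : ∀ᶠ z in nhds α, w z * f (a * z + b) = lam * f z)
    (heqg : ∀ᶠ z in nhds α, w z * g (a * z + b) = lam * g z) :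
    ∃ M : ℕ, analyticOrderAt f α = (M : ℕ∞) ∧ analyticOrderAt g α = (M : ℕ∞) ∧
      lam = a ^ M * w α ∧ ∃ c : ℂ, ∀ᶠ z in nhds α, f z = c * g z := by
  have ha : a ≠ 0 := by
    intro h; rw [h] at ha0; simp at ha0
  have h1a : (1 : ℂ) - a ≠ 0 := by
    intro h
    have : a = 1 := by linear_combination -h
    rw [this] at ha1; simp at ha1
  have hfix : a * α + b = α := by
    rw [hα]; field_simp; ring
  -- orders are finite
  have hford : analyticOrderAt f α ≠ ⊤ := fun h => hf0 (analyticOrderAt_eq_top.mp h)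
  have hgord : analyticOrderAt g α ≠ ⊤ := fun h => hg0 (analyticOrderAt_eq_top.mp h)
  obtain ⟨M, hM⟩ := WithTop.ne_top_iff_exists.mp hford
  obtain ⟨N, hN⟩ := WithTop.ne_top_iff_exists.mp hgord
  obtain ⟨u, hu, huα, hfrep⟩ := (hf.analyticOrderAt_eq_natCast (n := M)).mp hM.symm
  obtain ⟨v, hv, hvα, hgrep⟩ := (hg.analyticOrderAt_eq_natCast (n := N)).mp hN.symm
  simp only [smul_eq_mul] at hfrep hgrep
  have hlamM : lam = a ^ M * w α := key_lam hfix hw hu huα hfrep heqf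
  have hlamN : lam = a ^ N * w α := key_lam hfix hw hv hvα hgrep heqg
  have hMN : M = N := by
    apply pow_inj_abs ha0 ha1
    have : a ^ M * w α = a ^ N * w α := by rw [← hlamM, ← hlamN]
    exact mul_right_cancel₀ hwα this
  subst hMN
  refine ⟨M, hM.symm, hN.symm, hlamM, ?_⟩
  -- uniqueness part
  set c : ℂ := u α / v α with hc
  refine ⟨c, ?_⟩
  set F : ℂ → ℂ := fun z => f z - c * g z with hFdef
  have hF : AnalyticAt ℂ F α := hf.sub (analyticAt_const.mul hg)
  have heqF : ∀ᶠ z in 𝓝 α, w z * F (a * z + b) = lam * F z := by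
    filter_upwards [heqf, heqg] with z h1 h2
    simp only [hFdef]
    linear_combination h1 - c * h2
  set t : ℂ → ℂ := fun z => u z - c * v z with htdef
  have ht : AnalyticAt ℂ t α := hu.sub (analyticAt_const.mul hv)
  have htα : t α = 0 := by
    simp only [htdef, hc]
    field_simp
    ring
  have hFrep : ∀ᶠ z in 𝓝 α, F z = (z - α) ^ M * t z := by
    filter_upwards [hfrep, hgrep] with z h1 h2
    simp only [hFdef, htdef, h1, h2]; ring
  by_cases hF0 : ∀ᶠ z in 𝓝 α, F z = 0
  · filter_upwards [hF0] with z hz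
    have : f z - c * g z = 0 := hz
    linear_combination this
  · exfalso
    have hFord : analyticOrderAt F α ≠ ⊤ := fun h => hF0 (analyticOrderAt_eq_top.mp h)
    obtain ⟨K, hK⟩ := WithTop.ne_top_iff_exists.mp hFord
    obtain ⟨s, hs, hsα, hFrepK⟩ := (hF.analyticOrderAt_eq_natCast (n := K)).mp hK.symm
    simp only [smul_eq_mul] at hFrepK
    have hlamK : lam = a ^ K * w α := key_lam hfix hw hs hsα hFrepK heqF
    have hKM : K = M := by
      apply pow_inj_abs ha0 ha1
      have : a ^ K * w α = a ^ M * w α := by rw [← hlamK, ← hlamM]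
      exact mul_right_cancel₀ hwα this
    subst hKM
    -- s = t on punctured neighborhood, so s α = t α = 0, contradiction
    have hst : ∀ᶠ z in 𝓝[≠] α, s z = t z := by
      have hE : ∀ᶠ z in 𝓝[≠] α, z ≠ α := by
        have : ∀ᶠ z in 𝓝[≠] α, z ∈ ({α}ᶜ : Set ℂ) := eventually_mem_nhdsWithin
        exact this.mono fun z hz => hz
      filter_upwards [hFrep.filter_mono nhdsWithin_le_nhds,
        hFrepK.filter_mono nhdsWithin_le_nhds, hE] with z h1 h2 hz
      have hpow : ((z - α) ^ K : ℂ) ≠ 0 := pow_ne_zero _ (sub_ne_zero.mpr hz)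
      apply mul_left_cancel₀ hpow
      rw [← h2, h1]
    have := eq_at_of_punctured hs.continuousAt ht.continuousAt hst
    rw [htα] at this
    exact hsα this
end
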